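/- Let s be a prime, α a positive integer, and a an integer with |a| > 1. Suppose r is a prime with multiplicative order of a modulo r equal to s^α (i.e., r is a primitive prime divisor of a^{s^α} - 1), and let r* be the largest power of r dividing a^{s^α} - 1. If r* divides the least common multiple A = lcm(a^{n₁} - ε₁, …, a^{n_l} - ε_l), where each ε_i ∈ {1, -1} and each n_i is a positive integer, then either there exists i with s^α dividing n_i, or s = 2 and there exists i with ε_i = -1 and s^{α-1} dividing n_i. -/
import Mathlib

theorem stmt_3 (s : ℕ) (hs : s.Prime) (α : ℕ) (hα : 0 < α) (a : ℤ) (ha : 1 < |a|)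
    (r : ℕ) (hr : r.Prime) (hord : orderOf (a : ZMod r) = s ^ α)
    (rstar : ℕ) (hrstar : rstar = r ^ ((a ^ s ^ α - 1).natAbs.factorization r))
    (l : ℕ) (n : Fin l → ℕ) (ε : Fin l → ℤ)
    (hn : ∀ i, 0 < n i) (hε : ∀ i, ε i = 1 ∨ ε i = -1)
    (hdvd : (rstar : ℤ) ∣ Finset.univ.lcm (fun i => a ^ n i - ε i)) :
    (∃ i, s ^ α ∣ n i) ∨ (s = 2 ∧ ∃ i, ε i = -1 ∧ s ^ (α - 1) ∣ n i) := by
  have hrdvd : (r : ℤ) ∣ a ^ s ^ α - 1 := by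
    have h1 : ((a ^ s ^ α - 1 : ℤ) : ZMod r) = 0 := by
      push_cast
      rw [← hord, pow_orderOf_eq_one, sub_self]
    exact (ZMod.intCast_zmod_eq_zero_iff_dvd _ r).mp h1
  have hne : a ^ s ^ α - 1 ≠ 0 := by
    intro h
    have h2 : a ^ s ^ α = 1 := by linarith
    have h3 : |a ^ s ^ α| = 1 := by rw [h2]; simp
    rw [abs_pow] at h3
    have h4 : |a| ^ s ^ α ≥ |a| ^ 1 := pow_le_pow_right₀ (by linarith) (Nat.one_le_pow _ _ hs.pos)
    simp at h4
    linarith [h3 ▸ h4]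
  have hkpos : 0 < (a ^ s ^ α - 1).natAbs.factorization r := by
    apply hr.factorization_pos_of_dvd (Int.natAbs_ne_zero.mpr hne)
    exact Int.natCast_dvd_natCast.mp (by rwa [Int.natCast_natAbs, dvd_abs])
  have hrrstar : (r : ℤ) ∣ (rstar : ℤ) := by
    rw [hrstar]
    exact_mod_cast dvd_pow_self r hkpos.ne'
  have hrlcm : (r : ℤ) ∣ Finset.univ.lcm (fun i => a ^ n i - ε i) := hrrstar.trans hdvd
  have hrprod : (r : ℤ) ∣ ∏ i, (a ^ n i - ε i) := by
    refine hrlcm.trans (Finset.lcm_dvd fun i _ => Finset.dvd_prod_of_mem _ (Finset.mem_univ i))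
  have hrprime : Prime (r : ℤ) := Nat.prime_iff_prime_int.mp hr
  obtain ⟨i, -, hi⟩ := hrprime.exists_mem_finset_dvd hrprod
  have hzero : ((a ^ n i - ε i : ℤ) : ZMod r) = 0 :=
    (ZMod.intCast_zmod_eq_zero_iff_dvd _ r).mpr hi
  push_cast at hzero
  have heq : (a : ZMod r) ^ n i = ((ε i : ℤ) : ZMod r) := by
    have := sub_eq_zero.mp hzero
    exact_mod_cast this
  rcases hε i with h1 | h1
  · left
    refine ⟨i, ?_⟩
    rw [← hord]
    apply orderOf_dvd_of_pow_eq_one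
    rw [heq, h1]; simp
  · have hsq : (a : ZMod r) ^ (2 * n i) = 1 := by
      rw [mul_comm, pow_mul, heq, h1]
      simp
    have hd2 : s ^ α ∣ 2 * n i := hord ▸ orderOf_dvd_of_pow_eq_one hsq
    by_cases hs2 : s = 2
    · right
      refine ⟨hs2, i, h1, ?_⟩
      subst hs2
      have hα1 : α - 1 + 1 = α := by omega
      have : 2 * 2 ^ (α - 1) ∣ 2 * n i := by
        rwa [← pow_succ', hα1]
      exact (mul_dvd_mul_iff_left (two_ne_zero)).mp this
    · left
      refine ⟨i, ?_⟩
      have hcop : Nat.Coprime (s ^ α) 2 := by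
        apply Nat.Coprime.pow_left
        rw [hs.coprime_iff_not_dvd]
        intro hd
        exact hs2 ((Nat.prime_dvd_prime_iff_eq hs Nat.prime_two).mp hd)
      exact hcop.dvd_of_dvd_mul_left hd2
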